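/- Weyl-sum bound for powers of Gauss sums: Let F_q be a finite field with q > 2 elements, ψ : (F_q,+) → ℂˣ a nontrivial additive character, and n ≥ 1 an integer. Assume that |Kl_n(a, q)| ≤ n · q^{(n−1)/2} for every a ∈ F_q^×. Then |(1/(q^{n/2}(q−2))) Σ_{χ nontrivial} g(ψ, χ)^n| ≤ (2n + 1)/√q, the sum running over all nontrivial multiplicative characters χ : F_q^× → ℂˣ. -/

import Mathlib

open Finset
open scoped Classical

instance {F : Type*} [Field F] [Fintype F] : Finite (Fˣ →* ℂˣ) :=
  Finite.of_equiv _ MulChar.equivToUnitHom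

noncomputable instance {F : Type*} [Field F] [Fintype F] : Fintype (Fˣ →* ℂˣ) :=
  Fintype.ofFinite _

/-- The Gauss sum `g(ψ, χ) = ∑_{x ∈ F_q^×} ψ(x) χ(x)`. -/
noncomputable def gaussSum' {F : Type*} [Field F] [Fintype F]
    (ψ : AddChar F ℂ) (χ : Fˣ →* ℂˣ) : ℂ :=
  ∑ x : Fˣ, ψ (x : F) * (χ x : ℂ)

/-- The Kloosterman sum `Kl_n(a, q) = ∑_{x₁⋯xₙ = a, xᵢ ∈ F_q^×} ψ(x₁ + ⋯ + xₙ)`. -/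
noncomputable def Kl {F : Type*} [Field F] [Fintype F]
    (ψ : AddChar F ℂ) (n : ℕ) (a : Fˣ) : ℂ :=
  ∑ v ∈ Finset.univ.filter (fun v : Fin n → Fˣ => ∏ i, v i = a),
    ψ (∑ i, ((v i : F)))

section Aux

variable {F : Type*} [Field F] [Fintype F]

lemma aux_addChar_map_sum (ψ : AddChar F ℂ) {ι : Type*} (s : Finset ι) (f : ι → F) :
    ψ (∑ i ∈ s, f i) = ∏ i ∈ s, ψ (f i) := by
  induction s using Finset.cons_induction with
  | empty => simp
  | cons a s ha ih => rw [Finset.sum_cons, Finset.prod_cons, AddChar.map_add_eq_mul, ih]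

lemma aux_gauss_pow (ψ : AddChar F ℂ) (χ : Fˣ →* ℂˣ) (n : ℕ) :
    gaussSum' ψ χ ^ n = ∑ a : Fˣ, (χ a : ℂ) * Kl ψ n a := by
  rw [gaussSum', Fintype.sum_pow]
  rw [← Finset.sum_fiberwise Finset.univ (fun v : Fin n → Fˣ => ∏ i, v i)
    (fun v => ∏ i, (ψ ((v i : F)) * (χ (v i) : ℂ)))]
  refine Finset.sum_congr rfl fun a _ => ?_
  rw [Kl, Finset.mul_sum]
  refine Finset.sum_congr rfl fun v hv => ?_
  simp only [Finset.mem_filter] at hv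
  rw [Finset.prod_mul_distrib, ← aux_addChar_map_sum]
  have : ∏ i, (χ (v i) : ℂ) = (χ a : ℂ) := by
    rw [← hv.2, map_prod]
    push_cast
    rfl
  rw [this, mul_comm]

variable (F) in
/-- Number of characters equals number of units. -/
lemma aux_hasEnough : HasEnoughRootsOfUnity ℂ (Monoid.exponent Fˣ) := by
  have : NeZero ((Monoid.exponent Fˣ : ℂ)) :=
    ⟨Nat.cast_ne_zero.mpr (Monoid.exponent_ne_zero_of_finite)⟩
  infer_instance

lemma aux_sum_chars {a : Fˣ} (ha : a ≠ 1) :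
    ∑ χ : Fˣ →* ℂˣ, (χ a : ℂ) = 0 := by
  have := aux_hasEnough F
  obtain ⟨φ, hφ⟩ := CommGroup.exists_apply_ne_one_of_hasEnoughRootsOfUnity Fˣ ℂ ha
  have h : ∑ χ : Fˣ →* ℂˣ, (χ a : ℂ) = (φ a : ℂ) * ∑ χ : Fˣ →* ℂˣ, (χ a : ℂ) := by
    rw [Finset.mul_sum]
    exact Fintype.sum_equiv (Equiv.mulLeft φ).symm _ _ (fun χ => by
      simp [Units.val_mul])
  have h2 : ((φ a : ℂ) - 1) * ∑ χ : Fˣ →* ℂˣ, (χ a : ℂ) = 0 := by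
    rw [sub_mul, one_mul, ← h, sub_self]
  rcases mul_eq_zero.mp h2 with h3 | h3
  · exact absurd (Units.ext (by simpa using sub_eq_zero.mp h3)) hφ
  · exact h3

lemma aux_card_chars : Fintype.card (Fˣ →* ℂˣ) = Fintype.card F - 1 := by
  have := aux_hasEnough F
  obtain ⟨e⟩ := CommGroup.monoidHom_mulEquiv_of_hasEnoughRootsOfUnity Fˣ ℂ
  rw [Fintype.card_congr e.toEquiv, Fintype.card_units]

lemma aux_gauss_one (ψ : AddChar F ℂ) (hψ : ψ ≠ 1) :
    gaussSum' ψ (1 : Fˣ →* ℂˣ) = -1 := by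
  have h1 : gaussSum' ψ (1 : Fˣ →* ℂˣ) = ∑ x : Fˣ, ψ (x : F) := by
    simp [gaussSum']
  have h2 : ∑ x : Fˣ, ψ (x : F) = ∑ x ∈ (Finset.univ : Finset F) \ {0}, ψ x := by
    refine Finset.sum_bij (fun u _ => (u : F)) ?_ ?_ ?_ ?_
    · intro u _
      simp [Units.ne_zero u]
    · intro u _ u' _ h
      exact Units.ext h
    · intro x hx
      simp only [Finset.mem_sdiff, Finset.mem_univ, Finset.mem_singleton] at hx
      exact ⟨(IsUnit.mk0 x hx.2).unit, Finset.mem_univ _, rfl⟩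
    · intro u _
      rfl
  rw [h1, h2, Finset.sum_sdiff_eq_sub (Finset.subset_univ _),
    AddChar.sum_eq_zero_of_ne_one hψ]
  simp

end Aux

/-- **Weyl-sum bound for powers of Gauss sums.** If `q > 2`, `ψ` is a nontrivial additive
character, `n ≥ 1`, and `|Kl_n(a, q)| ≤ n q^{(n−1)/2}` for all `a ∈ F_q^×`, then
`|(1/(q^{n/2}(q−2))) ∑_{χ ≠ 1} g(ψ, χ)^n| ≤ (2n + 1)/√q`. -/
theorem weyl_sum_bound_for_gauss_powers
    {F : Type*} [Field F] [Fintype F] (hq : 2 < Fintype.card F)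
    (ψ : AddChar F ℂ) (hψ : ψ ≠ 1) (n : ℕ) (hn : 1 ≤ n)
    (hKl : ∀ a : Fˣ, ‖Kl ψ n a‖ ≤ n * (Fintype.card F : ℝ) ^ (((n : ℝ) - 1) / 2)) :
    ‖(1 / ((((Fintype.card F : ℝ) ^ ((n : ℝ) / 2) : ℝ) : ℂ) * ((Fintype.card F : ℂ) - 2))) *
        ∑ χ ∈ Finset.univ.filter (fun χ : Fˣ →* ℂˣ => χ ≠ 1), gaussSum' ψ χ ^ n‖
      ≤ (2 * n + 1) / Real.sqrt (Fintype.card F) := by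
  classical
  set q : ℕ := Fintype.card F with hqdef
  have hq3 : (3 : ℝ) ≤ (q : ℝ) := by exact_mod_cast hq
  have hq0 : (0 : ℝ) < (q : ℝ) := by linarith
  -- the full sum over all characters
  have hall : ∑ χ : Fˣ →* ℂˣ, gaussSum' ψ χ ^ n = ((q : ℂ) - 1) * Kl ψ n 1 := by
    simp_rw [aux_gauss_pow]
    rw [Finset.sum_comm]
    rw [Finset.sum_eq_single_of_mem (1 : Fˣ) (Finset.mem_univ _)]
    · rw [← Finset.sum_mul]
      congr 1
      have : ∀ χ : Fˣ →* ℂˣ, (χ (1 : Fˣ) : ℂ) = 1 := fun χ => by simp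
      simp only [this, Finset.sum_const, Finset.card_univ, nsmul_eq_mul, mul_one]
      rw [aux_card_chars, ← hqdef]
      push_cast [Nat.cast_sub (by omega : 1 ≤ q)]
      ring
    · intro a _ ha
      rw [← Finset.sum_mul, aux_sum_chars ha, zero_mul]
  -- the sum over nontrivial characters
  have hfilter : Finset.univ.filter (fun χ : Fˣ →* ℂˣ => χ ≠ 1) =
      (Finset.univ : Finset (Fˣ →* ℂˣ)).erase 1 := by
    ext χ; simp [Finset.mem_erase, and_comm]
  have hT : ∑ χ ∈ Finset.univ.filter (fun χ : Fˣ →* ℂˣ => χ ≠ 1), gaussSum' ψ χ ^ n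
      = ((q : ℂ) - 1) * Kl ψ n 1 - (-1) ^ n := by
    rw [hfilter, Finset.sum_erase_eq_sub (Finset.mem_univ _), hall,
      aux_gauss_one ψ hψ]
  -- norm bound on the sum
  have hnormT : ‖∑ χ ∈ Finset.univ.filter (fun χ : Fˣ →* ℂˣ => χ ≠ 1), gaussSum' ψ χ ^ n‖
      ≤ ((q : ℝ) - 1) * ((n : ℝ) * (q : ℝ) ^ (((n : ℝ) - 1) / 2)) + 1 := by
    rw [hT]
    refine (norm_sub_le _ _).trans ?_
    have h1 : ‖((q : ℂ) - 1) * Kl ψ n 1‖ ≤ ((q : ℝ) - 1) * ((n : ℝ) * (q : ℝ) ^ (((n : ℝ) - 1) / 2)) := by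
      rw [norm_mul]
      have he : ((q : ℂ) - 1) = ((((q : ℝ) - 1) : ℝ) : ℂ) := by push_cast; ring
      rw [he, Complex.norm_real, Real.norm_of_nonneg (by linarith)]
      exact mul_le_mul_of_nonneg_left (hKl 1) (by linarith)
    have h2 : ‖((-1 : ℂ)) ^ n‖ = 1 := by
      rw [norm_pow, norm_neg, norm_one, one_pow]
    linarith
  -- norm of the coefficient
  set A : ℝ := (q : ℝ) ^ ((n : ℝ) / 2) with hA
  have hA0 : (0 : ℝ) < A := Real.rpow_pos_of_pos hq0 _
  have hcoef : ‖(1 / (((A : ℝ) : ℂ) * ((q : ℂ) - 2)))‖ = 1 / (A * ((q : ℝ) - 2)) := by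
    have he : ((A : ℝ) : ℂ) * ((q : ℂ) - 2) = (((A * ((q : ℝ) - 2)) : ℝ) : ℂ) := by
      push_cast; ring
    rw [he, norm_div, norm_one, Complex.norm_real,
      Real.norm_of_nonneg (by nlinarith)]
  rw [norm_mul, hcoef]
  -- arithmetic
  have hcoef0 : (0 : ℝ) ≤ 1 / (A * ((q : ℝ) - 2)) :=
    le_of_lt (div_pos one_pos (mul_pos hA0 (by linarith)))
  refine (mul_le_mul_of_nonneg_left hnormT hcoef0).trans ?_
  set s : ℝ := Real.sqrt (q : ℝ) with hsdef
  have hs : s = (q : ℝ) ^ (1 / 2 : ℝ) := Real.sqrt_eq_rpow _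
  have hs0 : (0 : ℝ) < s := Real.sqrt_pos.mpr hq0
  have hn1 : (1 : ℝ) ≤ (n : ℝ) := by exact_mod_cast hn
  have hsA : s ≤ A := by
    rw [hs, hA]
    exact Real.rpow_le_rpow_of_exponent_le (by linarith) (by linarith)
  have hE : (q : ℝ) ^ (((n : ℝ) - 1) / 2) = A / s := by
    rw [hs, hA, ← Real.rpow_sub hq0]
    congr 1
    ring
  rw [hE, one_div_mul_eq_div, div_le_div_iff₀ (by nlinarith) hs0]
  have hXs : (((q : ℝ) - 1) * ((n : ℝ) * (A / s)) + 1) * s = ((q : ℝ) - 1) * (n : ℝ) * A + s := by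
    field_simp
  rw [hXs]
  have key : ((q : ℝ) - 1) * (n : ℝ) + 1 ≤ (2 * (n : ℝ) + 1) * ((q : ℝ) - 2) := by
    nlinarith [mul_nonneg (by linarith : (0 : ℝ) ≤ (n : ℝ)) (by linarith : (0 : ℝ) ≤ (q : ℝ) - 3)]
  nlinarith [mul_le_mul_of_nonneg_right key hA0.le]
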